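/- Let X^{(i)} be defined recursively from a nonvanishing sequence u₀, a nonvanishing sequence p, a sequence r, and a base point n₀ by: X^{(0)} = 1; for i even (i ≥ 2), X^{(i)}(n) = Σ*_{s=n₀}^{n-1} X^{(i-1)}(s)/(p(s)u₀(s)u₀(s+1)); for i odd, X^{(i)}(n) = Σ*_{s=n₀}^{n-1} u₀(s+1)² X^{(i-1)}(s+1) r(s+1), where Σ* denotes the indefinite sum vanishing at n₀. Then for every k ≥ 1 and every m with n₀ - k + 1 ≤ m ≤ n₀ + k, we have X^{(2k)}(m) = 0. -/

import Mathlib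

/-- The indefinite sum of `f` vanishing at `n₀`. -/
noncomputable def istar (n₀ : ℤ) (f : ℤ → ℂ) (n : ℤ) : ℂ :=
  if n₀ ≤ n then ∑ j ∈ Finset.Ico n₀ n, f j else -∑ j ∈ Finset.Ico n n₀, f j

/-- The sequences `X⁽ⁱ⁾`: `X⁽⁰⁾ = 1`, even steps sum `X⁽ⁱ⁻¹⁾(s)/(p(s)u₀(s)u₀(s+1))`,
odd steps sum `u₀(s+1)² X⁽ⁱ⁻¹⁾(s+1) r(s+1)`. -/
noncomputable def Xseq (u₀ p r : ℤ → ℂ) (n₀ : ℤ) : ℕ → ℤ → ℂ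
  | 0 => fun _ => 1
  | i + 1 =>
      if (i + 1) % 2 = 0 then
        istar n₀ (fun s => Xseq u₀ p r n₀ i s / (p s * u₀ s * u₀ (s + 1)))
      else
        istar n₀ (fun s => u₀ (s + 1) ^ 2 * Xseq u₀ p r n₀ i (s + 1) * r (s + 1))

/-- The sequences `Y⁽ⁱ⁾`: `Y⁽⁰⁾ = 1`, with the parity roles exchanged. -/
noncomputable def Yseq (u₀ p r : ℤ → ℂ) (n₀ : ℤ) : ℕ → ℤ → ℂ
  | 0 => fun _ => 1
  | i + 1 =>
      if (i + 1) % 2 = 0 then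
        istar n₀ (fun s => u₀ (s + 1) ^ 2 * Yseq u₀ p r n₀ i (s + 1) * r (s + 1))
      else
        istar n₀ (fun s => Yseq u₀ p r n₀ i s / (p s * u₀ s * u₀ (s + 1)))

lemma istar_eq_zero (n₀ a b : ℤ) (f : ℤ → ℂ) (ha : a ≤ n₀) (hb : n₀ ≤ b)
    (hf : ∀ s, a ≤ s → s < b → f s = 0) (m : ℤ) (hm1 : a ≤ m) (hm2 : m ≤ b) :
    istar n₀ f m = 0 := by
  unfold istar
  split
  · apply Finset.sum_eq_zero
    intro j hj
    simp only [Finset.mem_Ico] at hj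
    exact hf j (le_trans ha hj.1) (lt_of_lt_of_le hj.2 hm2)
  · rw [Finset.sum_eq_zero, neg_zero]
    intro j hj
    simp only [Finset.mem_Ico] at hj
    exact hf j (le_trans hm1 hj.1) (lt_of_lt_of_le hj.2 hb)

lemma Xseq_odd (u₀ p r : ℤ → ℂ) (n₀ : ℤ) (k : ℕ) :
    Xseq u₀ p r n₀ (2 * k + 1) =
      istar n₀ (fun s => u₀ (s + 1) ^ 2 * Xseq u₀ p r n₀ (2 * k) (s + 1) * r (s + 1)) := by
  rw [Xseq, if_neg (by omega)]

lemma Xseq_even (u₀ p r : ℤ → ℂ) (n₀ : ℤ) (k : ℕ) :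
    Xseq u₀ p r n₀ (2 * k + 2) =
      istar n₀ (fun s => Xseq u₀ p r n₀ (2 * k + 1) s / (p s * u₀ s * u₀ (s + 1))) := by
  rw [show 2 * k + 2 = (2 * k + 1) + 1 from rfl, Xseq, if_pos (by omega)]

lemma Xseq_odd_vanishing (u₀ p r : ℤ → ℂ) (n₀ : ℤ) :
    ∀ k : ℕ, ∀ t : ℤ, n₀ - k ≤ t → t ≤ n₀ + k →
      Xseq u₀ p r n₀ (2 * k + 1) t = 0 := by
  intro k
  induction k with
  | zero =>
      intro t ht1 ht2
      rw [Xseq_odd]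
      apply istar_eq_zero n₀ n₀ n₀ _ le_rfl le_rfl _ t (by omega) (by omega)
      intro s hs1 hs2; omega
  | succ k ih =>
      intro t ht1 ht2
      have heven : ∀ x : ℤ, n₀ - k ≤ x → x ≤ n₀ + k + 1 →
          Xseq u₀ p r n₀ (2 * k + 2) x = 0 := by
        intro x hx1 hx2
        rw [Xseq_even]
        apply istar_eq_zero n₀ (n₀ - k) (n₀ + k + 1) _ (by omega) (by omega) _ x hx1 hx2
        intro s hs1 hs2
        rw [ih s (by omega) (by omega), zero_div]
      rw [Xseq_odd]
      apply istar_eq_zero n₀ (n₀ - (k + 1)) (n₀ + (k + 1)) _ (by omega) (by omega) _ t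
        (by push_cast at *; omega) (by push_cast at *; omega)
      intro s hs1 hs2
      rw [show (2 : ℕ) * (k + 1) = 2 * k + 2 from by ring,
        heven (s + 1) (by push_cast at *; omega) (by push_cast at *; omega),
        mul_zero, zero_mul]

/-- Lemma 1(i), first part: vanishing of `X⁽²ᵏ⁾` near the base point. -/
theorem Xseq_vanishing (u₀ p r : ℤ → ℂ) (n₀ : ℤ)
    (hp : ∀ n, p n ≠ 0) (hu₀ : ∀ n, u₀ n ≠ 0) :
    ∀ k : ℕ, 1 ≤ k → ∀ m : ℤ, n₀ - k + 1 ≤ m → m ≤ n₀ + k →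
      Xseq u₀ p r n₀ (2 * k) m = 0 := by
  intro k hk m hm1 hm2
  obtain ⟨j, rfl⟩ : ∃ j, k = j + 1 := ⟨k - 1, by omega⟩
  rw [show 2 * (j + 1) = 2 * j + 2 from by ring, Xseq_even]
  apply istar_eq_zero n₀ (n₀ - j) (n₀ + j + 1) _ (by omega) (by omega) _ m
    (by push_cast at *; omega) (by push_cast at *; omega)
  intro s hs1 hs2
  rw [Xseq_odd_vanishing u₀ p r n₀ j s (by omega) (by omega), zero_div]
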